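/- Let c and L be natural numbers and let f : ℕ → ℕ satisfy f 1 ≤ c and, for every n ≥ 2, f n ≤ c * (n * L + n^2 * Nat.log 2 n) + f ((n + 1) / 2) + f (n / 2), where division is natural-number division and Nat.log 2 is the base-2 logarithm on ℕ. Then there exists a constant C (depending only on c) such that for every n ≥ 1, f n ≤ C * (n * (Nat.log 2 n + 1) * L + n^2 * (Nat.log 2 n + 1)). (Bit complexity of EXT: the recurrence B(n) = O(nL + n² log n) + B(⌈n/2⌉) + B(⌊n/2⌋) has solution B(n) ∈ O(n log(n) L + n² log(n)).) -/

import Mathlib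

/-- Bit complexity of EXT: the recurrence `B(1) ≤ c` and
`B(n) ≤ c * (n*L + n² * log₂ n) + B(⌈n/2⌉) + B(⌊n/2⌋)` for `n ≥ 2` has solution
`B(n) ∈ O(n log(n) L + n² log(n))`, with the hidden constant depending only on `c`. -/
theorem ext_bit_complexity (c : ℕ) :
    ∃ C : ℕ, ∀ (L : ℕ) (f : ℕ → ℕ),
      f 1 ≤ c →
      (∀ n, 2 ≤ n →
        f n ≤ c * (n * L + n ^ 2 * Nat.log 2 n) + f ((n + 1) / 2) + f (n / 2)) →
      ∀ n, 1 ≤ n →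
        f n ≤ C * (n * (Nat.log 2 n + 1) * L + n ^ 2 * (Nat.log 2 n + 1)) := by
  refine ⟨3 * c, fun L f h1 hrec n => ?_⟩
  induction n using Nat.strong_induction_on with
  | _ n ih =>
    intro hn
    rcases eq_or_lt_of_le hn with h | h
    · -- n = 1
      subst h
      simp [Nat.log_one_right]
      nlinarith
    · -- 2 ≤ n
      have h2 : 2 ≤ n := h
      set a := (n + 1) / 2 with ha
      set b := n / 2 with hb
      have hab : a + b = n := by omega
      have ha1 : 1 ≤ a := by omega
      have hb1 : 1 ≤ b := by omega
      have haln : a < n := by omega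
      have hbln : b < n := by omega
      have h2a : n ≤ 2 * a := by omega
      have h3b : n ≤ 3 * b := by omega
      have hla : Nat.log 2 a ≤ Nat.log 2 n := Nat.log_mono_right (by omega)
      have hlb : Nat.log 2 b + 1 = Nat.log 2 n := by
        have hd : Nat.log 2 b = Nat.log 2 n - 1 := by rw [hb]; exact Nat.log_div_base 2 n
        have hpos : 1 ≤ Nat.log 2 n := Nat.log_pos (by norm_num) h2
        omega
      have IHa := ih a haln ha1
      have IHb := ih b hbln hb1
      have hrn := hrec n h2
      have h6ab : n * n ≤ 6 * (a * b) := by nlinarith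
      set ka := Nat.log 2 a
      set kb := Nat.log 2 b
      set kn := Nat.log 2 n
      have IHa' : f a ≤ 3 * c * (a * (kn + 1) * L + a ^ 2 * (kn + 1)) := by
        refine le_trans IHa ?_
        have : ka + 1 ≤ kn + 1 := by omega
        nlinarith
      have IHb' : f b ≤ 3 * c * (b * kn * L + b ^ 2 * kn) := by
        rw [← hlb]
        exact IHb
      have hsq : n ^ 2 = a ^ 2 + 2 * (a * b) + b ^ 2 := by
        rw [← hab]; ring
      have hL : (c * n + 3 * c * (a * (kn + 1)) + 3 * c * (b * kn)) * L ≤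
          3 * c * (n * (kn + 1)) * L := by
        apply Nat.mul_le_mul_right
        have h1' : c * n ≤ 3 * c * b := by
          calc c * n ≤ c * (3 * b) := Nat.mul_le_mul_left c h3b
            _ = 3 * c * b := by ring
        have hexp : 3 * c * (n * (kn + 1)) =
            3 * c * (a * (kn + 1)) + 3 * c * (b * kn) + 3 * c * b := by
          rw [← hab]; ring
        linarith
      have hQ : c * (n ^ 2 * kn) + 3 * c * (a ^ 2 * (kn + 1)) + 3 * c * (b ^ 2 * kn) ≤
          3 * c * (n ^ 2 * (kn + 1)) := by
        have hkey : c * (n ^ 2 * kn) ≤ 6 * c * (a * b * kn) := by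
          calc c * (n ^ 2 * kn) = c * (n * n * kn) := by ring
            _ ≤ c * (6 * (a * b) * kn) :=
                Nat.mul_le_mul_left c (Nat.mul_le_mul_right kn h6ab)
            _ = 6 * c * (a * b * kn) := by ring
        have hexp : 3 * c * (n ^ 2 * (kn + 1)) =
            3 * c * (a ^ 2 * kn) + 6 * c * (a * b * kn) + 3 * c * (b ^ 2 * kn)
              + 3 * c * a ^ 2 + 6 * c * (a * b) + 3 * c * b ^ 2 := by
          rw [hsq]; ring
        have hsplit : 3 * c * (a ^ 2 * (kn + 1)) =
            3 * c * (a ^ 2 * kn) + 3 * c * a ^ 2 := by ring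
        linarith [Nat.zero_le (6 * c * (a * b)), Nat.zero_le (3 * c * b ^ 2)]
      calc f n ≤ c * (n * L + n ^ 2 * kn) + f a + f b := hrn
        _ ≤ c * (n * L + n ^ 2 * kn) + 3 * c * (a * (kn + 1) * L + a ^ 2 * (kn + 1))
              + 3 * c * (b * kn * L + b ^ 2 * kn) := by
            exact Nat.add_le_add (Nat.add_le_add le_rfl IHa') IHb'
        _ = (c * n + 3 * c * (a * (kn + 1)) + 3 * c * (b * kn)) * L
              + (c * (n ^ 2 * kn) + 3 * c * (a ^ 2 * (kn + 1)) + 3 * c * (b ^ 2 * kn)) := by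
            ring
        _ ≤ 3 * c * (n * (kn + 1)) * L + 3 * c * (n ^ 2 * (kn + 1)) :=
            Nat.add_le_add hL hQ
        _ = 3 * c * (n * (kn + 1) * L + n ^ 2 * (kn + 1)) := by ring
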